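/- Under Assumption 1, if q({M}) > 0, then for every initial distribution p₀ ∈ P(𝓜) the sequence (p_i)_{i≥0} converges in total variation to p*. -/

import Mathlib

open MeasureTheory Set Filter

/-- Selective advantage `s(x,u) = w(x,u) / ∫ w(y,u) u(dy)` if the mean fitness is
positive, and `1` otherwise. -/
noncomputable def sel (w : ℝ → MeasureTheory.Measure ℝ → ℝ)
    (u : MeasureTheory.Measure ℝ) (x : ℝ) : ℝ :=
  if 0 < ∫ y, w y u ∂u then w x u / ∫ y, w y u ∂u else 1

/-- The sequence of type distributions:
`p_i(dx) = (1-β) s(x,p_{i-1}) p_{i-1}(dx) + β q(dx)`. -/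
noncomputable def evol (w : ℝ → MeasureTheory.Measure ℝ → ℝ) (β : ℝ)
    (q p₀ : MeasureTheory.Measure ℝ) : ℕ → MeasureTheory.Measure ℝ
  | 0 => p₀
  | i + 1 =>
      ENNReal.ofReal (1 - β) •
          ((evol w β q p₀ i).withDensity fun x =>
            ENNReal.ofReal (sel w (evol w β q p₀ i) x))
        + ENNReal.ofReal β • q

/-- Convergence in total variation (uniform convergence over all measurable sets). -/
def TendstoTV (p : ℕ → MeasureTheory.Measure ℝ) (μ : MeasureTheory.Measure ℝ) : Prop :=
  ∀ ε : ℝ, 0 < ε → ∃ N : ℕ, ∀ i ≥ N, ∀ A : Set ℝ, MeasurableSet A →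
    |((p i) A).toReal - (μ A).toReal| < ε

/-- Weak convergence of measures (tested against bounded continuous functions). -/
def TendstoWeak (p : ℕ → MeasureTheory.Measure ℝ) (μ : MeasureTheory.Measure ℝ) : Prop :=
  ∀ f : BoundedContinuousFunction ℝ ℝ,
    Filter.Tendsto (fun i => ∫ x, f x ∂(p i)) Filter.atTop (nhds (∫ x, f x ∂μ))

/-- Assumption 1: if `v` restricted to `[0,M)` is a component of `u` restricted to `[0,M)`,
then `s(·,u) ≥ s(·,v)` on `[0,M]`. -/
def Assumption1 (M : ℝ) (w : ℝ → MeasureTheory.Measure ℝ → ℝ) : Prop :=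
  ∀ u v : MeasureTheory.Measure ℝ,
    IsProbabilityMeasure u → IsProbabilityMeasure v →
    u ((Set.Icc 0 M)ᶜ) = 0 → v ((Set.Icc 0 M)ᶜ) = 0 →
    v.restrict (Set.Ico 0 M) ≤ u.restrict (Set.Ico 0 M) →
    ∀ x ∈ Set.Icc (0:ℝ) M, sel w v x ≤ sel w u x

/-- Assumption 2: for every `0 ≤ a < M` and `0 < ε < 1` there is `c(a,ε) > 1` such that
`s(M,u) ≥ c(a,ε) s(M,v)` whenever `v_{[0,M)} ≺ u_{[0,M)}` and `D_u(a) ≥ D_v(a) + ε`. -/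
def Assumption2 (M : ℝ) (w : ℝ → MeasureTheory.Measure ℝ → ℝ) : Prop :=
  ∀ a : ℝ, 0 ≤ a → a < M → ∀ ε : ℝ, 0 < ε → ε < 1 → ∃ c : ℝ, 1 < c ∧
    ∀ u v : MeasureTheory.Measure ℝ,
      IsProbabilityMeasure u → IsProbabilityMeasure v →
      u ((Set.Icc 0 M)ᶜ) = 0 → v ((Set.Icc 0 M)ᶜ) = 0 →
      v.restrict (Set.Ico 0 M) ≤ u.restrict (Set.Ico 0 M) →
      (v (Set.Icc 0 a)).toReal + ε ≤ (u (Set.Icc 0 a)).toReal →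
      c * sel w v M ≤ sel w u M

/-! ### Auxiliary lemmas -/

lemma sel_nonneg' (w : ℝ → Measure ℝ → ℝ) (hw : ∀ x u, 0 ≤ w x u) (u : Measure ℝ) (x : ℝ) :
    0 ≤ sel w u x := by
  unfold sel
  split
  · exact div_nonneg (hw x u) (le_of_lt ‹_›)
  · norm_num

lemma sel_meas' (w : ℝ → Measure ℝ → ℝ) (hwm : ∀ u, Measurable fun x => w x u)
    (u : Measure ℝ) : Measurable fun x => ENNReal.ofReal (sel w u x) := by
  unfold sel
  split
  · exact ENNReal.measurable_ofReal.comp ((hwm u).div_const _)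
  · exact measurable_const

lemma lintegral_sel' (w : ℝ → Measure ℝ → ℝ) (hw : ∀ x u, 0 ≤ w x u)
    (u : Measure ℝ) [IsProbabilityMeasure u] :
    ∫⁻ x, ENNReal.ofReal (sel w u x) ∂u = 1 := by
  by_cases h : 0 < ∫ y, w y u ∂u
  · have hint : Integrable (fun y => w y u) u := by
      by_contra hni
      rw [integral_undef hni] at h
      exact lt_irrefl 0 h
    have key : ∫⁻ x, ENNReal.ofReal (w x u) ∂u = ENNReal.ofReal (∫ y, w y u ∂u) :=
      (ofReal_integral_eq_lintegral_ofReal hint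
        (Filter.Eventually.of_forall fun x => hw x u)).symm
    simp only [sel, if_pos h]
    have : ∀ x, ENNReal.ofReal (w x u / ∫ y, w y u ∂u)
        = ENNReal.ofReal (w x u) / ENNReal.ofReal (∫ y, w y u ∂u) := fun x =>
      ENNReal.ofReal_div_of_pos h
    simp_rw [this, div_eq_mul_inv]
    rw [lintegral_mul_const' _ _ (ENNReal.inv_ne_top.mpr (ENNReal.ofReal_pos.mpr h).ne'),
      key, ← div_eq_mul_inv, ENNReal.div_self (ENNReal.ofReal_pos.mpr h).ne'
        ENNReal.ofReal_ne_top]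
  · simp [sel, if_neg h]

lemma evol_succ_apply' (w : ℝ → Measure ℝ → ℝ) (β : ℝ) (q p₀ : Measure ℝ)
    (i : ℕ) (A : Set ℝ) (hA : MeasurableSet A) :
    evol w β q p₀ (i+1) A
      = ENNReal.ofReal (1-β) *
          ∫⁻ x in A, ENNReal.ofReal (sel w (evol w β q p₀ i) x) ∂(evol w β q p₀ i)
        + ENNReal.ofReal β * q A := by
  rw [show evol w β q p₀ (i+1) = ENNReal.ofReal (1 - β) •
          ((evol w β q p₀ i).withDensity fun x =>
            ENNReal.ofReal (sel w (evol w β q p₀ i) x))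
        + ENNReal.ofReal β • q from rfl]
  simp [Measure.add_apply, Measure.smul_apply, withDensity_apply _ hA, smul_eq_mul]

lemma evol_isProb' (w : ℝ → Measure ℝ → ℝ) (hw : ∀ x u, 0 ≤ w x u) (β : ℝ)
    (hβ : β ∈ Set.Ioo (0:ℝ) 1) (q p₀ : Measure ℝ) [IsProbabilityMeasure q]
    [IsProbabilityMeasure p₀] : ∀ i, IsProbabilityMeasure (evol w β q p₀ i) := by
  intro i
  induction i with
  | zero => simpa [evol] using ‹IsProbabilityMeasure p₀›
  | succ i ih =>
    constructor
    rw [evol_succ_apply' w β q p₀ i univ MeasurableSet.univ, Measure.restrict_univ]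
    haveI := ih
    rw [lintegral_sel' w hw (evol w β q p₀ i), measure_univ, mul_one, mul_one,
      ← ENNReal.ofReal_add (by linarith [hβ.2]) (le_of_lt hβ.1)]
    norm_num

lemma evol_null' (M : ℝ) (w : ℝ → Measure ℝ → ℝ) (β : ℝ) (q p₀ : Measure ℝ)
    (hq : q ((Icc 0 M)ᶜ) = 0) (hp₀ : p₀ ((Icc 0 M)ᶜ) = 0) :
    ∀ i, evol w β q p₀ i ((Icc 0 M)ᶜ) = 0 := by
  intro i
  induction i with
  | zero => simpa [evol] using hp₀
  | succ i ih =>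
    rw [evol_succ_apply' w β q p₀ i _ measurableSet_Icc.compl, hq, mul_zero, add_zero,
      setLIntegral_measure_zero _ _ ih, mul_zero]

lemma evol_mono' (M : ℝ) (hM : 0 < M) (w : ℝ → Measure ℝ → ℝ)
    (hw : ∀ x u, 0 ≤ w x u) (hwm : ∀ u, Measurable fun x => w x u)
    (hA1 : Assumption1 M w)
    (β : ℝ) (hβ : β ∈ Set.Ioo (0:ℝ) 1)
    (q p₀ : Measure ℝ) [IsProbabilityMeasure q] [IsProbabilityMeasure p₀]
    (hq : q ((Icc 0 M)ᶜ) = 0) (hp₀ : p₀ ((Icc 0 M)ᶜ) = 0) :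
    ∀ i, (evol w β q (Measure.dirac M) i).restrict (Ico 0 M)
      ≤ (evol w β q p₀ i).restrict (Ico 0 M) := by
  haveI : IsProbabilityMeasure (Measure.dirac M) := Measure.dirac.isProbabilityMeasure
  have hdnull : (Measure.dirac M) ((Icc 0 M)ᶜ) = 0 := by
    rw [Measure.dirac_apply' _ measurableSet_Icc.compl]
    simp [hM.le]
  intro i
  induction i with
  | zero =>
    have : (Measure.dirac M).restrict (Ico 0 M) = 0 := by
      rw [Measure.restrict_eq_zero, Measure.dirac_apply' _ measurableSet_Ico]
      simp
    show (Measure.dirac M).restrict (Ico 0 M) ≤ p₀.restrict (Ico 0 M)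
    rw [this]; exact Measure.zero_le _
  | succ i ih =>
    set v := evol w β q (Measure.dirac M) i with hv
    set u := evol w β q p₀ i with hu
    haveI hpv : IsProbabilityMeasure v := evol_isProb' w hw β hβ q _ i
    haveI hpu : IsProbabilityMeasure u := evol_isProb' w hw β hβ q _ i
    have hnv : v ((Icc 0 M)ᶜ) = 0 := evol_null' M w β q _ hq hdnull i
    have hnu : u ((Icc 0 M)ᶜ) = 0 := evol_null' M w β q _ hq hp₀ i
    have hsel := hA1 u v hpu hpv hnu hnv ih
    rw [Measure.le_iff]
    intro s hs
    rw [Measure.restrict_apply hs, Measure.restrict_apply hs,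
      evol_succ_apply', evol_succ_apply']
    · refine add_le_add_left (mul_le_mul_right (α := ENNReal) ?_ _) _
      calc ∫⁻ x in s ∩ Ico 0 M, ENNReal.ofReal (sel w v x) ∂v
          ≤ ∫⁻ x in s ∩ Ico 0 M, ENNReal.ofReal (sel w u x) ∂v := by
            apply setLIntegral_mono (sel_meas' w hwm u)
            intro x hx
            exact ENNReal.ofReal_le_ofReal
              (hsel x ⟨hx.2.1, hx.2.2.le⟩)
        _ ≤ ∫⁻ x in s ∩ Ico 0 M, ENNReal.ofReal (sel w u x) ∂u := by
            apply lintegral_mono'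
            · rw [← Measure.restrict_restrict hs, ← Measure.restrict_restrict hs]
              exact Measure.restrict_mono_measure ih s
            · exact le_rfl
    · exact hs.inter measurableSet_Ico
    · exact hs.inter measurableSet_Ico

lemma step_ineq' (β c a b s sh : ℝ) (hβ1 : β < 1) (hc : 0 < c)
    (ha : 0 ≤ a) (hab : a ≤ b) (hb : 0 < b) (hsh : 0 ≤ sh) (hs : sh ≤ s)
    (hshb : sh * b ≤ 1) :
    ((1-β)*(sh*b) + c - ((1-β)*(s*a) + c)) / ((1-β)*(sh*b) + c)
      ≤ (1-β)/((1-β)+c) * ((b-a)/b) := by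
  have h1β : (0:ℝ) < 1 - β := by linarith
  have hD : 0 < (1-β)*(sh*b) + c := by positivity
  have hD2 : 0 < ((1-β)+c) * b := by positivity
  rw [div_mul_div_comm, div_le_div_iff₀ hD hD2]
  nlinarith [mul_nonneg (mul_nonneg h1β.le (sub_nonneg.mpr hab)) (mul_nonneg hc.le (sub_nonneg.mpr hshb)),
    mul_nonneg (mul_nonneg (mul_nonneg h1β.le hsh) (sub_nonneg.mpr hab)) hc.le,
    mul_nonneg (mul_nonneg h1β.le (sub_nonneg.mpr hs)) (mul_nonneg ha hD2.le)]

lemma sel_mul_le_one' (w : ℝ → Measure ℝ → ℝ) (hw : ∀ x u, 0 ≤ w x u)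
    (u : Measure ℝ) [IsProbabilityMeasure u] (M : ℝ) :
    sel w u M * (u {M}).toReal ≤ 1 := by
  have h1 : ENNReal.ofReal (sel w u M) * u {M} ≤ 1 := by
    rw [← lintegral_sel' w hw u]
    calc ENNReal.ofReal (sel w u M) * u {M}
        = ∫⁻ x in {M}, ENNReal.ofReal (sel w u x) ∂u := by
          rw [lintegral_singleton]
      _ ≤ ∫⁻ x, ENNReal.ofReal (sel w u x) ∂u := setLIntegral_le_lintegral _ _
  have h2 := ENNReal.toReal_mono (by simp) h1
  rwa [ENNReal.toReal_mul, ENNReal.toReal_ofReal (sel_nonneg' w hw u M),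
    ENNReal.toReal_one] at h2

lemma mass_split' (M : ℝ) (hM : 0 ≤ M) (ξ : Measure ℝ) [IsProbabilityMeasure ξ]
    (hξ : ξ ((Icc 0 M)ᶜ) = 0) :
    (ξ (Ico 0 M)).toReal + (ξ {M}).toReal = 1 := by
  have h1 : ξ (Ico 0 M) + ξ {M} = ξ (Icc 0 M) := by
    rw [← Ico_union_right hM]
    exact (measure_union (by simp [disjoint_singleton_right])
      (measurableSet_singleton M)).symm
  have h2 : ξ (Icc 0 M) = 1 := by
    have h3 := measure_add_measure_compl (μ := ξ) (s := Icc 0 M) measurableSet_Icc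
    rw [hξ, add_zero, measure_univ] at h3
    exact h3
  have := congrArg ENNReal.toReal (h1.trans h2)
  rwa [ENNReal.toReal_add (measure_ne_top ξ _) (measure_ne_top ξ _), ENNReal.toReal_one]
    at this

lemma tv_bound' (M : ℝ) (hM : 0 ≤ M) (μ ν : Measure ℝ)
    [IsProbabilityMeasure μ] [IsProbabilityMeasure ν]
    (hμ : μ ((Icc 0 M)ᶜ) = 0) (hν : ν ((Icc 0 M)ᶜ) = 0)
    (h : ν.restrict (Ico 0 M) ≤ μ.restrict (Ico 0 M))
    (A : Set ℝ) (hA : MeasurableSet A) :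
    |(μ A).toReal - (ν A).toReal| ≤ (ν {M}).toReal - (μ {M}).toReal := by
  set I := Ico (0:ℝ) M with hI
  have hImeas : MeasurableSet I := measurableSet_Ico
  have hres : ∀ s : Set ℝ, MeasurableSet s → ν (s ∩ I) ≤ μ (s ∩ I) := by
    intro s hs
    have h1 := Measure.le_iff.mp h s hs
    rwa [Measure.restrict_apply hs, Measure.restrict_apply hs] at h1
  have hdec : ∀ (ξ : Measure ℝ), ξ ((Icc 0 M)ᶜ) = 0 → ∀ s : Set ℝ, MeasurableSet s →
      ξ s = ξ (s ∩ I) + ξ (s ∩ {M}) := by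
    intro ξ hξ s hs
    have h1 : ξ (s ∩ Icc 0 M) + ξ (s \ Icc 0 M) = ξ s :=
      measure_inter_add_diff s measurableSet_Icc
    have h2 : ξ (s \ Icc 0 M) = 0 :=
      measure_mono_null (fun x hx => hx.2) hξ
    have h3 : s ∩ Icc 0 M = (s ∩ I) ∪ (s ∩ {M}) := by
      rw [← inter_union_distrib_left, hI, Ico_union_right hM]
    have h4 : ξ (s ∩ I ∪ s ∩ {M}) = ξ (s ∩ I) + ξ (s ∩ {M}) := by
      apply measure_union _ (hs.inter (measurableSet_singleton M))
      exact Disjoint.mono inter_subset_right inter_subset_right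
        (by simp [disjoint_singleton_right, hI])
    rw [← h1, h2, add_zero, h3, h4]
  have hμA := hdec μ hμ A hA
  have hνA := hdec ν hν A hA
  have hμU := hdec μ hμ univ MeasurableSet.univ
  have hνU := hdec ν hν univ MeasurableSet.univ
  simp only [univ_inter] at hμU hνU
  have rμA : (μ A).toReal = (μ (A ∩ I)).toReal + (μ (A ∩ {M})).toReal := by
    rw [hμA, ENNReal.toReal_add (measure_ne_top μ _) (measure_ne_top μ _)]
  have rνA : (ν A).toReal = (ν (A ∩ I)).toReal + (ν (A ∩ {M})).toReal := by
    rw [hνA, ENNReal.toReal_add (measure_ne_top ν _) (measure_ne_top ν _)]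
  have rμU : (1:ℝ) = (μ I).toReal + (μ {M}).toReal := by
    have := congrArg ENNReal.toReal hμU
    rwa [ENNReal.toReal_add (measure_ne_top μ _) (measure_ne_top μ _), measure_univ,
      ENNReal.toReal_one] at this
  have rνU : (1:ℝ) = (ν I).toReal + (ν {M}).toReal := by
    have := congrArg ENNReal.toReal hνU
    rwa [ENNReal.toReal_add (measure_ne_top ν _) (measure_ne_top ν _), measure_univ,
      ENNReal.toReal_one] at this
  have c1 : (ν (A ∩ I)).toReal ≤ (μ (A ∩ I)).toReal :=
    ENNReal.toReal_mono (measure_ne_top μ _) (hres A hA)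
  have c2 : (ν (Aᶜ ∩ I)).toReal ≤ (μ (Aᶜ ∩ I)).toReal :=
    ENNReal.toReal_mono (measure_ne_top μ _) (hres Aᶜ hA.compl)
  have spl : ∀ (ξ : Measure ℝ), ξ (A ∩ I) + ξ (Aᶜ ∩ I) = ξ I := by
    intro ξ
    rw [inter_comm A I, inter_comm Aᶜ I, ← diff_eq]
    exact measure_inter_add_diff I hA
  have splμ : (μ I).toReal = (μ (A ∩ I)).toReal + (μ (Aᶜ ∩ I)).toReal := by
    rw [← spl μ, ENNReal.toReal_add (measure_ne_top μ _) (measure_ne_top μ _)]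
  have splν : (ν I).toReal = (ν (A ∩ I)).toReal + (ν (Aᶜ ∩ I)).toReal := by
    rw [← spl ν, ENNReal.toReal_add (measure_ne_top ν _) (measure_ne_top ν _)]
  by_cases hMA : M ∈ A
  · have : A ∩ ({M} : Set ℝ) = {M} := by
      ext x; simp (config := {contextual := true}) [hMA]
    rw [this] at rμA rνA
    rw [abs_le]; constructor <;> linarith
  · have : A ∩ ({M} : Set ℝ) = ∅ := by
      ext x; simp (config := {contextual := true}) [hMA]
    rw [this] at rμA rνA
    simp only [measure_empty, ENNReal.toReal_zero, add_zero] at rμA rνA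
    rw [abs_le]; constructor <;> linarith

lemma seq_decay' (β c : ℝ) (hβ1 : β < 1) (hc : 0 < c) (a b s sh : ℕ → ℝ)
    (ha0 : ∀ i, 0 ≤ a i) (hab : ∀ i, a i ≤ b i) (hb0 : 0 < b 0) (hb1 : ∀ i, b i ≤ 1)
    (hsh0 : ∀ i, 0 ≤ sh i) (hss : ∀ i, sh i ≤ s i) (hshb : ∀ i, sh i * b i ≤ 1)
    (hra : ∀ i, a (i+1) = (1-β)*(s i * a i) + c)
    (hrb : ∀ i, b (i+1) = (1-β)*(sh i * b i) + c) :
    ∀ i, b i - a i ≤ ((1-β)/((1-β)+c))^i := by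
  have h1β : (0:ℝ) < 1 - β := by linarith
  set κ : ℝ := (1-β)/((1-β)+c) with hκdef
  have hκ0 : 0 ≤ κ := by positivity
  have hbpos : ∀ i, 0 < b i := by
    intro i
    cases i with
    | zero => exact hb0
    | succ i =>
      rw [hrb i]
      have h2 : 0 ≤ sh i * b i := mul_nonneg (hsh0 i) ((ha0 i).trans (hab i))
      nlinarith
  have hρ : ∀ i, (b i - a i)/b i ≤ κ^i := by
    intro i
    induction i with
    | zero =>
      rw [pow_zero]
      exact (div_le_one (hbpos 0)).mpr (by linarith [ha0 0])
    | succ i ih =>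
      calc (b (i+1) - a (i+1))/b (i+1)
          ≤ κ * ((b i - a i)/b i) := by
            rw [hra i, hrb i]
            exact step_ineq' β c (a i) (b i) (s i) (sh i) hβ1 hc (ha0 i) (hab i)
              (hbpos i) (hsh0 i) (hss i) (hshb i)
        _ ≤ κ * κ^i := mul_le_mul_of_nonneg_left ih hκ0
        _ = κ^(i+1) := by rw [pow_succ]; ring
  intro i
  refine le_trans ?_ (hρ i)
  rw [le_div_iff₀ (hbpos i)]
  nlinarith [hab i, hb1 i, hbpos i]

/-- Theorem 5 of the paper. Under Assumption 1, if `q({M}) > 0`, then for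
every initial distribution `p₀` the sequence `(p_i)` converges in total variation to `p*`,
the total-variation limit of the sequence started from `δ_M`. -/
theorem stmt1 (M : ℝ) (hM : 0 < M) (β : ℝ) (hβ : β ∈ Set.Ioo (0:ℝ) 1)
    (q : MeasureTheory.Measure ℝ) [IsProbabilityMeasure q] (hq : q ((Set.Icc 0 M)ᶜ) = 0)
    (w : ℝ → MeasureTheory.Measure ℝ → ℝ)
    (hw_nonneg : ∀ x u, 0 ≤ w x u)
    (hw_meas : ∀ u, Measurable fun x => w x u)
    (hA1 : Assumption1 M w)
    (pstar : MeasureTheory.Measure ℝ) [IsProbabilityMeasure pstar]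
    (hpstar : TendstoTV (evol w β q (MeasureTheory.Measure.dirac M)) pstar)
    (hqM : 0 < q ({M} : Set ℝ))
    (p₀ : MeasureTheory.Measure ℝ) [IsProbabilityMeasure p₀]
    (hp₀ : p₀ ((Set.Icc 0 M)ᶜ) = 0) :
    TendstoTV (evol w β q p₀) pstar := by
  haveI hdprob : IsProbabilityMeasure (Measure.dirac M) := Measure.dirac.isProbabilityMeasure
  have hdnull : (Measure.dirac M) ((Icc 0 M)ᶜ) = 0 := by
    rw [Measure.dirac_apply' _ measurableSet_Icc.compl]
    simp [hM.le]
  have hpu : ∀ i, IsProbabilityMeasure (evol w β q p₀ i) :=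
    evol_isProb' w hw_nonneg β hβ q p₀
  have hpv : ∀ i, IsProbabilityMeasure (evol w β q (Measure.dirac M) i) :=
    evol_isProb' w hw_nonneg β hβ q _
  have hnu : ∀ i, evol w β q p₀ i ((Icc 0 M)ᶜ) = 0 := evol_null' M w β q p₀ hq hp₀
  have hnv : ∀ i, evol w β q (Measure.dirac M) i ((Icc 0 M)ᶜ) = 0 :=
    evol_null' M w β q _ hq hdnull
  have hres : ∀ i, (evol w β q (Measure.dirac M) i).restrict (Ico 0 M)
      ≤ (evol w β q p₀ i).restrict (Ico 0 M) :=
    evol_mono' M hM w hw_nonneg hw_meas hA1 β hβ q p₀ hq hp₀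
  -- real sequences
  set a : ℕ → ℝ := fun i => ((evol w β q p₀ i) {M}).toReal with hadef
  set b : ℕ → ℝ := fun i => ((evol w β q (Measure.dirac M) i) {M}).toReal with hbdef
  set s : ℕ → ℝ := fun i => sel w (evol w β q p₀ i) M with hsdef
  set sh : ℕ → ℝ := fun i => sel w (evol w β q (Measure.dirac M) i) M with hshdef
  set c : ℝ := β * (q {M}).toReal with hcdef
  have hc : 0 < c := mul_pos hβ.1 (ENNReal.toReal_pos hqM.ne' (measure_ne_top q _))
  have ha0 : ∀ i, 0 ≤ a i := fun i => ENNReal.toReal_nonneg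
  have hIco : ∀ i, ((evol w β q (Measure.dirac M) i) (Ico 0 M)).toReal
      ≤ ((evol w β q p₀ i) (Ico 0 M)).toReal := by
    intro i
    haveI := hpu i
    refine ENNReal.toReal_mono (measure_ne_top _ _) ?_
    have h1 := Measure.le_iff.mp (hres i) (Ico 0 M) measurableSet_Ico
    rwa [Measure.restrict_apply measurableSet_Ico, Measure.restrict_apply measurableSet_Ico,
      inter_self] at h1
  have hmsu : ∀ i, ((evol w β q p₀ i) (Ico 0 M)).toReal + a i = 1 := by
    intro i; haveI := hpu i; exact mass_split' M hM.le _ (hnu i)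
  have hmsv : ∀ i, ((evol w β q (Measure.dirac M) i) (Ico 0 M)).toReal + b i = 1 := by
    intro i; haveI := hpv i; exact mass_split' M hM.le _ (hnv i)
  have hab : ∀ i, a i ≤ b i := by
    intro i; have := hIco i; linarith [hmsu i, hmsv i]
  have hb1 : ∀ i, b i ≤ 1 := by
    intro i
    have h1 : (0:ℝ) ≤ ((evol w β q (Measure.dirac M) i) (Ico 0 M)).toReal :=
      ENNReal.toReal_nonneg
    linarith [hmsv i]
  have hb0 : 0 < b 0 := by
    have : b 0 = ((Measure.dirac M) {M}).toReal := rfl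
    rw [this, Measure.dirac_apply_of_mem (mem_singleton M)]
    norm_num
  have hsh0 : ∀ i, 0 ≤ sh i := fun i => sel_nonneg' w hw_nonneg _ M
  have hss : ∀ i, sh i ≤ s i := fun i =>
    hA1 _ _ (hpu i) (hpv i) (hnu i) (hnv i) (hres i) M ⟨hM.le, le_rfl⟩
  have hshb : ∀ i, sh i * b i ≤ 1 := by
    intro i; haveI := hpv i
    exact sel_mul_le_one' w hw_nonneg _ M
  have hrec : ∀ (p' : Measure ℝ), IsProbabilityMeasure p' →
      ∀ i, IsProbabilityMeasure (evol w β q p' i) →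
      ((evol w β q p' (i+1)) {M}).toReal
        = (1-β) * (sel w (evol w β q p' i) M * ((evol w β q p' i) {M}).toReal)
          + β * (q {M}).toReal := by
    intro p' _ i hi
    haveI := hi
    rw [evol_succ_apply' w β q p' i {M} (measurableSet_singleton M), lintegral_singleton,
      ENNReal.toReal_add (ENNReal.mul_ne_top ENNReal.ofReal_ne_top
        (ENNReal.mul_ne_top ENNReal.ofReal_ne_top (measure_ne_top _ _)))
        (ENNReal.mul_ne_top ENNReal.ofReal_ne_top (measure_ne_top _ _)),
      ENNReal.toReal_mul, ENNReal.toReal_mul, ENNReal.toReal_mul,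
      ENNReal.toReal_ofReal (by linarith [hβ.2] : (0:ℝ) ≤ 1 - β),
      ENNReal.toReal_ofReal hβ.1.le,
      ENNReal.toReal_ofReal (sel_nonneg' w hw_nonneg _ M)]
  have hra : ∀ i, a (i+1) = (1-β)*(s i * a i) + c :=
    fun i => hrec p₀ ‹_› i (hpu i)
  have hrb : ∀ i, b (i+1) = (1-β)*(sh i * b i) + c :=
    fun i => hrec (Measure.dirac M) hdprob i (hpv i)
  have hd : ∀ i, b i - a i ≤ ((1-β)/((1-β)+c))^i :=
    seq_decay' β c hβ.2 hc a b s sh ha0 hab hb0 hb1 hsh0 hss hshb hra hrb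
  -- limit argument
  set κ : ℝ := (1-β)/((1-β)+c) with hκdef
  have h1β : (0:ℝ) < 1 - β := by linarith [hβ.2]
  have hκ0 : 0 ≤ κ := by positivity
  have hκ1 : κ < 1 := by
    rw [hκdef, div_lt_one (by linarith)]
    linarith
  intro ε hε
  obtain ⟨N₂, hN₂⟩ := hpstar (ε/2) (half_pos hε)
  have hκtend : Tendsto (fun i => κ^i) atTop (nhds 0) :=
    tendsto_pow_atTop_nhds_zero_of_lt_one hκ0 hκ1
  obtain ⟨N₁, hN₁⟩ := eventually_atTop.mp (hκtend.eventually (gt_mem_nhds (half_pos hε)))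
  refine ⟨max N₁ N₂, fun i hi A hA => ?_⟩
  haveI := hpu i; haveI := hpv i
  have h1 : |((evol w β q p₀ i) A).toReal - ((evol w β q (Measure.dirac M) i) A).toReal|
      ≤ κ^i :=
    le_trans (tv_bound' M hM.le _ _ (hnu i) (hnv i) (hres i) A hA) (hd i)
  have h2 := hN₂ i (le_trans (le_max_right _ _) hi) A hA
  have h3 : κ^i < ε/2 := hN₁ i (le_trans (le_max_left _ _) hi)
  have h4 := abs_sub_le ((evol w β q p₀ i) A).toReal
    ((evol w β q (Measure.dirac M) i) A).toReal ((pstar A).toReal)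
  linarith
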